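/- Let m be a positive integer and let σ, τ be two permutations of {1,...,m}. Then the intersection of the simplices Δ_σ = {x ∈ [0,1]^m : x_{σ(1)} ≥ ... ≥ x_{σ(m)}} and Δ_τ = {x ∈ [0,1]^m : x_{τ(1)} ≥ ... ≥ x_{τ(m)}} equals the convex hull of the common vertices of Δ_σ and Δ_τ, where the vertices of Δ_σ are the points e_{σ(1)} + ... + e_{σ(i)} for i = 0,...,m. -/
import Mathlib

/-- A downward-closed finset of naturals is an initial segment. -/
lemma downclosed_eq_range (T : Finset ℕ) (h : ∀ a ∈ T, ∀ b < a, b ∈ T) :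
    T = Finset.range T.card := by
  have hsub : T ⊆ Finset.range T.card := by
    intro a ha
    by_contra hca
    simp only [Finset.mem_range, not_lt] at hca
    have hIic : Finset.Iic a ⊆ T := by
      intro b hb
      rcases lt_or_eq_of_le (Finset.mem_Iic.1 hb) with h' | h'
      · exact h a ha b h'
      · exact h' ▸ ha
    have := Finset.card_le_card hIic
    simp [Nat.card_Iic] at this
    omega
  exact Finset.eq_of_subset_of_card_le hsub (by simp)

/-- For permutations `σ, τ` of `{1,...,m}`, the intersection of the simplices
`Δ_σ` and `Δ_τ` equals the convex hull of their common vertices, the vertices of `Δ_σ`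
being the points `p_i^σ = e_{σ(1)} + ... + e_{σ(i)}`, `i = 0,...,m`. -/
theorem stmt3 (m : ℕ) (hm : 0 < m) (σ τ : Equiv.Perm (Fin m))
    (p : Equiv.Perm (Fin m) → Fin (m + 1) → Fin m → ℝ)
    (hp : ∀ ρ i j, p ρ i j = if (ρ.symm j : ℕ) < (i : ℕ) then 1 else 0)
    (Δ : Equiv.Perm (Fin m) → Set (Fin m → ℝ))
    (hΔ : ∀ ρ, Δ ρ = {x : Fin m → ℝ | (∀ j, x j ∈ Set.Icc (0 : ℝ) 1) ∧
      ∀ a b : Fin m, a ≤ b → x (ρ b) ≤ x (ρ a)}) :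
    Δ σ ∩ Δ τ = convexHull ℝ (Set.range (p σ) ∩ Set.range (p τ)) := by
  classical
  -- vertices lie in the corresponding simplex
  have hvert : ∀ (ρ : Equiv.Perm (Fin m)) (i : Fin (m + 1)), p ρ i ∈ Δ ρ := by
    intro ρ i
    rw [hΔ]
    refine ⟨fun j => ?_, fun a b hab => ?_⟩
    · rw [hp]; split <;> norm_num
    · rw [hp, hp]
      simp only [Equiv.symm_apply_apply]
      have hab' : (a : ℕ) ≤ (b : ℕ) := hab
      rcases lt_or_ge (b : ℕ) (i : ℕ) with hb' | hb'
      · rw [if_pos hb', if_pos (by omega : (a : ℕ) < (i : ℕ))]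
      · rw [if_neg (not_lt.2 hb')]
        split <;> norm_num
  -- simplices are convex
  have hconv : ∀ ρ : Equiv.Perm (Fin m), Convex ℝ (Δ ρ) := by
    intro ρ
    rw [hΔ]
    intro y hy z hz a b ha hb hab
    refine ⟨fun j => ?_, fun u v huv => ?_⟩
    · have h1 := hy.1 j
      have h2 := hz.1 j
      simp only [Set.mem_Icc] at h1 h2 ⊢
      simp only [Pi.add_apply, Pi.smul_apply, smul_eq_mul]
      constructor
      · exact add_nonneg (mul_nonneg ha h1.1) (mul_nonneg hb h2.1)
      · nlinarith [h1.2, h2.2]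
    · have h1 := hy.2 u v huv
      have h2 := hz.2 u v huv
      simp only [Pi.add_apply, Pi.smul_apply, smul_eq_mul]
      have := add_le_add (mul_le_mul_of_nonneg_left h1 ha) (mul_le_mul_of_nonneg_left h2 hb)
      linarith
  -- the hard inclusion
  have key : ∀ x ∈ Δ σ ∩ Δ τ, x ∈ convexHull ℝ (Set.range (p σ) ∩ Set.range (p τ)) := by
    intro x hx
    obtain ⟨hxσ, hxτ⟩ := hx
    rw [hΔ] at hxσ hxτ
    obtain ⟨hx01, hσs⟩ := hxσ
    obtain ⟨-, hτs⟩ := hxτ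
    -- the decreasing sequence of sorted values, padded with 1 and 0
    set g : ℕ → ℝ := fun k =>
      if h : 0 < k ∧ k ≤ m then x (σ ⟨k - 1, by omega⟩) else if k = 0 then 1 else 0 with hgdef
    have hg0 : g 0 = 1 := by simp [hgdef]
    have hgmid : ∀ k, ∀ h : 0 < k ∧ k ≤ m, g k = x (σ ⟨k - 1, by omega⟩) := by
      intro k h; simp [hgdef, h]
    have hgtop : ∀ k, m < k → g k = 0 := by
      intro k hk
      have h1 : ¬(0 < k ∧ k ≤ m) := by omega
      have h2 : k ≠ 0 := by omega
      simp [hgdef, h1, h2]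
    have hmono : ∀ k, g (k + 1) ≤ g k := by
      intro k
      rcases Nat.eq_zero_or_pos k with rfl | hk
      · rw [hg0, hgmid 1 ⟨one_pos, hm⟩]
        exact (hx01 _).2
      · rcases lt_or_ge k m with hkm | hkm
        · rw [hgmid k ⟨hk, hkm.le⟩, hgmid (k + 1) ⟨by omega, by omega⟩]
          refine hσs _ _ ?_
          simp only [Fin.mk_le_mk]
          omega
        · rcases eq_or_lt_of_le hkm with heq | hkm'
          · rw [hgtop (k + 1) (by omega), hgmid k ⟨hk, by omega⟩]
            exact (hx01 _).1
          · rw [hgtop (k + 1) (by omega), hgtop k hkm']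
      -- weights
    set w : Fin (m + 1) → ℝ := fun i => g i - g ((i : ℕ) + 1) with hwdef
    have hw0 : ∀ i, 0 ≤ w i := fun i => sub_nonneg.2 (hmono i)
    have hws : ∑ i : Fin (m + 1), w i = 1 := by
      rw [show (∑ i : Fin (m + 1), w i) = ∑ i : Fin (m + 1),
          (fun k : ℕ => g k - g (k + 1)) (i : ℕ) from rfl]
      rw [Fin.sum_univ_eq_sum_range (fun k : ℕ => g k - g (k + 1)) (m + 1)]
      rw [Finset.sum_range_sub' g (m + 1)]
      rw [hg0, hgtop (m + 1) (by omega)]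
      ring
    -- the convex combination gives back x
    have hxval : ∑ i : Fin (m + 1), w i • p σ i = x := by
      funext j
      have happ : (∑ i : Fin (m + 1), w i • p σ i) j = ∑ i : Fin (m + 1), w i * p σ i j := by
        rw [Finset.sum_apply]
        simp [smul_eq_mul]
      rw [happ]
      set s : ℕ := (σ.symm j : ℕ) with hsdef
      have hs : s < m := (σ.symm j).isLt
      set G : ℕ → ℝ := fun k => g (max k (s + 1)) with hGdef
      have hterm : ∀ i : Fin (m + 1), w i * p σ i j = G (i : ℕ) - G ((i : ℕ) + 1) := by
        intro i
        rw [hp]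
        rcases lt_or_ge s (i : ℕ) with h | h
        · rw [if_pos h]
          have h1 : max (i : ℕ) (s + 1) = (i : ℕ) := by omega
          have h2 : max ((i : ℕ) + 1) (s + 1) = (i : ℕ) + 1 := by omega
          simp only [hGdef, h1, h2, hwdef]
          ring
        · rw [if_neg (not_lt.2 h)]
          have h1 : max (i : ℕ) (s + 1) = s + 1 := by omega
          have h2 : max ((i : ℕ) + 1) (s + 1) = s + 1 := by omega
          simp only [hGdef, h1, h2]
          ring
      rw [Finset.sum_congr rfl fun i _ => hterm i]
      rw [show (∑ i : Fin (m + 1), (G (i : ℕ) - G ((i : ℕ) + 1))) = ∑ i : Fin (m + 1),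
          (fun k : ℕ => G k - G (k + 1)) (i : ℕ) from rfl]
      rw [Fin.sum_univ_eq_sum_range (fun k : ℕ => G k - G (k + 1)) (m + 1)]
      rw [Finset.sum_range_sub' G (m + 1)]
      have hG0 : G 0 = x j := by
        have h1 : max 0 (s + 1) = s + 1 := by omega
        have := hgmid (s + 1) ⟨by omega, by omega⟩
        simp only [hGdef, h1, this]
        congr 1
        have : (⟨s + 1 - 1, by omega⟩ : Fin m) = σ.symm j := by
          apply Fin.ext; simp [hsdef]
        rw [this, σ.apply_symm_apply]
      have hGm : G (m + 1) = 0 := by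
        have h1 : max (m + 1) (s + 1) = m + 1 := by omega
        simp only [hGdef, h1]
        exact hgtop (m + 1) (by omega)
      rw [hG0, hGm]
      ring
    -- positive-weight vertices are common vertices
    have hz : ∀ i ∈ Finset.univ.filter (fun i : Fin (m + 1) => w i ≠ 0),
        p σ i ∈ Set.range (p σ) ∩ Set.range (p τ) := by
      intro i hi
      simp only [Finset.mem_filter, Finset.mem_univ, true_and] at hi
      have hci : g ((i : ℕ) + 1) < g (i : ℕ) := by
        have := hw0 i
        have h' : w i = g (i : ℕ) - g ((i : ℕ) + 1) := rfl
        rcases lt_or_eq_of_le this with h | h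
        · rw [h'] at h; linarith
        · exact absurd h.symm hi
      set c : ℝ := g ((i : ℕ) + 1) with hcdef
      set S : Finset (Fin m) := Finset.univ.filter (fun j => c < x j) with hSdef
      -- Step A : the σ-description of S
      have hA : ∀ j : Fin m, (σ.symm j : ℕ) < (i : ℕ) ↔ j ∈ S := by
        intro j
        simp only [hSdef, Finset.mem_filter, Finset.mem_univ, true_and]
        constructor
        · intro hj
          have him : (i : ℕ) ≤ m := by omega
          have h0 : 0 < (i : ℕ) := by omega
          have hle : x (σ ⟨(i : ℕ) - 1, by omega⟩) ≤ x (σ (σ.symm j)) := by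
            refine hσs _ _ ?_
            show (σ.symm j : ℕ) ≤ (i : ℕ) - 1
            omega
          rw [σ.apply_symm_apply] at hle
          calc c < g (i : ℕ) := hci
            _ = x (σ ⟨(i : ℕ) - 1, by omega⟩) := hgmid _ ⟨h0, him⟩
            _ ≤ x j := hle
        · intro hj
          by_contra hlt
          push_neg at hlt
          have hjm : (σ.symm j : ℕ) < m := (σ.symm j).isLt
          have him : (i : ℕ) < m := by omega
          have hc' : c = x (σ ⟨(i : ℕ), him⟩) := by
            rw [hcdef, hgmid ((i : ℕ) + 1) ⟨by omega, by omega⟩]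
            congr 1
          have hle : x (σ (σ.symm j)) ≤ x (σ ⟨(i : ℕ), him⟩) := by
            refine hσs _ _ ?_
            show (i : ℕ) ≤ (σ.symm j : ℕ)
            omega
          rw [σ.apply_symm_apply] at hle
          rw [hc'] at hj
          linarith
      -- general description of S via any sorting permutation
      have hmemS : ∀ ρ : Equiv.Perm (Fin m), (∀ a b : Fin m, a ≤ b → x (ρ b) ≤ x (ρ a)) →
          ∀ j : Fin m, j ∈ S ↔ (ρ.symm j : ℕ) < S.card := by
        intro ρ hρ j
        set T : Finset ℕ := S.image (fun j => (ρ.symm j : ℕ)) with hTdef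
        have hdc : ∀ a ∈ T, ∀ b < a, b ∈ T := by
          intro a ha b hb
          simp only [hTdef, Finset.mem_image] at ha ⊢
          obtain ⟨j', hj'S, hj'⟩ := ha
          have hbm : b < m := by
            have := (ρ.symm j').isLt
            omega
          refine ⟨ρ ⟨b, hbm⟩, ?_, by simp⟩
          simp only [hSdef, Finset.mem_filter, Finset.mem_univ, true_and] at hj'S ⊢
          have hle : x (ρ (ρ.symm j')) ≤ x (ρ ⟨b, hbm⟩) := by
            refine hρ _ _ ?_
            show b ≤ (ρ.symm j' : ℕ)
            omega
          rw [ρ.apply_symm_apply] at hle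
          linarith
        have hinj : Function.Injective (fun j : Fin m => (ρ.symm j : ℕ)) := by
          intro a b hab
          exact ρ.symm.injective (Fin.ext hab)
        have hcard : T.card = S.card := Finset.card_image_of_injective _ hinj
        have heq : T = Finset.range S.card := by
          rw [downclosed_eq_range T hdc, hcard]
        constructor
        · intro hj
          have : (ρ.symm j : ℕ) ∈ T := Finset.mem_image_of_mem _ hj
          rw [heq, Finset.mem_range] at this
          exact this
        · intro hj
          have : (ρ.symm j : ℕ) ∈ T := by rw [heq, Finset.mem_range]; exact hj
          simp only [hTdef, Finset.mem_image] at this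
          obtain ⟨j', hj', hval⟩ := this
          have : j' = j := hinj hval
          exact this ▸ hj'
      -- conclude (i : ℕ) = S.card
      have hScard : S.card ≤ m := le_trans (Finset.card_le_univ S) (by simp)
      have hiS : (i : ℕ) = S.card := by
        have hiff : ∀ k : ℕ, (hk : k < m) → (k < (i : ℕ) ↔ k < S.card) := by
          intro k hk
          have h1 := hA (σ ⟨k, hk⟩)
          have h2 := hmemS σ hσs (σ ⟨k, hk⟩)
          simp only [Equiv.symm_apply_apply] at h1 h2
          exact h1.trans h2
        by_contra hne
        rcases Nat.lt_or_ge (i : ℕ) S.card with h | h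
        · have him : (i : ℕ) < m := lt_of_lt_of_le h hScard
          have := hiff (i : ℕ) him
          omega
        · have h' : S.card < (i : ℕ) := by omega
          have him : S.card < m := by omega
          have := hiff S.card him
          omega
      -- the vertex is common
      have hps : p σ i = p τ i := by
        funext j
        rw [hp, hp]
        have hiffst : ((τ.symm j : ℕ) < (i : ℕ)) ↔ ((σ.symm j : ℕ) < (i : ℕ)) := by
          rw [hiS, ← hmemS τ hτs j, ← hA j, hiS]
        simp only [hiffst]
      exact ⟨⟨i, rfl⟩, ⟨i, hps.symm⟩⟩
    -- assemble the convex combination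
    have hsum : (0 : ℝ) < ∑ i ∈ Finset.univ.filter (fun i : Fin (m + 1) => w i ≠ 0), w i := by
      rw [Finset.sum_filter_ne_zero, hws]
      exact one_pos
    have hmem := Finset.centerMass_mem_convexHull
      (Finset.univ.filter (fun i : Fin (m + 1) => w i ≠ 0))
      (fun i _ => hw0 i) hsum hz
    have hcm : (Finset.univ.filter (fun i : Fin (m + 1) => w i ≠ 0)).centerMass w (p σ) = x := by
      rw [Finset.centerMass_filter_ne_zero, Finset.centerMass_eq_of_sum_1 _ _ hws, hxval]
    rwa [hcm] at hmem
  apply Set.Subset.antisymm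
  · intro x hx
    exact key x hx
  · apply convexHull_min
    · rintro y ⟨⟨i, rfl⟩, ⟨i', hi'⟩⟩
      exact ⟨hvert σ i, hi' ▸ hvert τ i'⟩
    · exact (hconv σ).inter (hconv τ)
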